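/- Let q, r, k be positive integers, B = q(r-1)+k, and let X̂, Ŷ ∈ ℚ⟦z⟧ be as in the context. Then z·X̂'(z) = X̂(z)·(1 - (q(r-1)+k)·Ŷ(z)^{r-1}·X̂(z)^{r-1+k}) in ℚ⟦z⟧, where X̂' is the formal derivative; equivalently, z·X̂'(z)·(1+(k/r)·z^B) = X̂(z)·(1+((k/r)-B)·z^B). -/

import Mathlib

open Finset Nat PowerSeries

/-- The generalized binomial coefficient `binom(α, n) = α(α-1)⋯(α-n+1)/n!`. -/
noncomputable def qbinom (α : ℚ) (n : ℕ) : ℚ :=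
  (∏ i ∈ Finset.range n, (α - i)) / n !

/-- The formal binomial series `(1+u)^α = Σ_{n≥0} binom(α,n)·u^n`, for a power
series `u` with zero constant term. -/
noncomputable def binomPow (α : ℚ) (u : PowerSeries ℚ) : PowerSeries ℚ :=
  PowerSeries.mk fun d =>
    ∑ n ∈ Finset.range (d + 1), qbinom α n * PowerSeries.coeff (R := ℚ) d (u ^ n)

/-- The parametrisation `X̂(z) = z·(1+(k/r)·z^B)^{-r/k}`, where `B = q(r-1)+k`. -/
noncomputable def Xhat (q r k : ℕ) : PowerSeries ℚ :=
  PowerSeries.X *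
    binomPow (-(r : ℚ) / k)
      (PowerSeries.C (R := ℚ) ((k : ℚ) / r) * PowerSeries.X ^ (q * (r - 1) + k))

/-- The parametrisation `Ŷ(z) = z^{q-1}·(1+(k/r)·z^B)^{(r+k)/k}`, where `B = q(r-1)+k`. -/
noncomputable def Yhat (q r k : ℕ) : PowerSeries ℚ :=
  PowerSeries.X ^ (q - 1) *
    binomPow (((r : ℚ) + k) / k)
      (PowerSeries.C (R := ℚ) ((k : ℚ) / r) * PowerSeries.X ^ (q * (r - 1) + k))

lemma qbinom_zero (α : ℚ) : qbinom α 0 = 1 := by simp [qbinom]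

lemma qbinom_succ (α : ℚ) (n : ℕ) :
    ((n : ℚ) + 1) * qbinom α (n + 1) = (α - n) * qbinom α n := by
  have h1 : ((n : ℚ) + 1) ≠ 0 := by positivity
  have h2 : ((n ! : ℚ)) ≠ 0 := by exact_mod_cast (Nat.factorial_ne_zero n)
  rw [qbinom, qbinom, Finset.prod_range_succ, Nat.factorial_succ]
  push_cast
  field_simp

lemma qbinom_eq_choose (α : ℚ) (n : ℕ) : qbinom α n = Ring.choose α n := by
  have hp : (descPochhammer ℤ n).smeval α = ∏ i ∈ Finset.range n, (α - i) := by
    induction n with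
    | zero => simp [descPochhammer_zero, Polynomial.smeval_one]
    | succ m ih =>
      rw [descPochhammer_succ_right, Polynomial.smeval_mul, ih, Finset.prod_range_succ]
      simp [Polynomial.smeval_sub, Polynomial.smeval_X, Polynomial.smeval_natCast]
  have h := Ring.descPochhammer_eq_factorial_smul_choose α n
  rw [hp] at h
  have h2 : ((n ! : ℚ)) ≠ 0 := by exact_mod_cast (Nat.factorial_ne_zero n)
  rw [qbinom, h, nsmul_eq_mul]
  field_simp

lemma qbinom_add (α β : ℚ) (n : ℕ) :
    qbinom (α + β) n = ∑ ij ∈ Finset.HasAntidiagonal.antidiagonal n, qbinom α ij.1 * qbinom β ij.2 := by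
  simp only [qbinom_eq_choose]
  exact Ring.add_choose_eq n (Commute.all α β)

noncomputable def gser (α c : ℚ) (B : ℕ) : PowerSeries ℚ :=
  PowerSeries.mk fun d => if B ∣ d then qbinom α (d / B) * c ^ (d / B) else 0

lemma coeff_gser (α c : ℚ) (B d : ℕ) :
    PowerSeries.coeff (R := ℚ) d (gser α c B) =
      if B ∣ d then qbinom α (d / B) * c ^ (d / B) else 0 := by
  simp [gser]

lemma binomPow_eq (α c : ℚ) (B : ℕ) (hB : 0 < B) :
    binomPow α (PowerSeries.C (R := ℚ) c * PowerSeries.X ^ B) = gser α c B := by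
  ext d
  rw [coeff_gser, binomPow, PowerSeries.coeff_mk]
  have hc : ∀ n : ℕ, PowerSeries.coeff (R := ℚ) d ((PowerSeries.C (R := ℚ) c * PowerSeries.X ^ B) ^ n)
      = if d = B * n then c ^ n else 0 := by
    intro n
    rw [mul_pow, ← map_pow, ← pow_mul, PowerSeries.coeff_C_mul, PowerSeries.coeff_X_pow]
    split <;> simp_all
  simp only [hc, mul_ite, mul_zero]
  by_cases h : B ∣ d
  · obtain ⟨m, rfl⟩ := h
    rw [Finset.sum_eq_single m]
    · simp [Nat.mul_div_cancel_left _ hB]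
    · intro n hn hne
      rw [if_neg]
      exact fun hh => hne (Nat.eq_of_mul_eq_mul_left hB hh.symm)
    · intro hm
      exfalso
      exact hm (Finset.mem_range.mpr (Nat.lt_succ_of_le (Nat.le_mul_of_pos_left m hB)))
  · rw [if_neg h]
    refine Finset.sum_eq_zero fun n hn => ?_
    exact if_neg fun hh => h ⟨n, hh⟩

lemma gser_mul (α β c : ℚ) (B : ℕ) (hB : 0 < B) :
    gser α c B * gser β c B = gser (α + β) c B := by
  ext d
  rw [PowerSeries.coeff_mul, coeff_gser]
  simp only [coeff_gser]
  set F : ℕ × ℕ → ℚ := fun ij =>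
      (if B ∣ ij.1 then qbinom α (ij.1 / B) * c ^ (ij.1 / B) else 0) *
      (if B ∣ ij.2 then qbinom β (ij.2 / B) * c ^ (ij.2 / B) else 0) with hF
  have hzero : ∀ ij : ℕ × ℕ, ¬ (B ∣ ij.1 ∧ B ∣ ij.2) → F ij = 0 := by
    intro ij hij
    by_cases h1 : B ∣ ij.1
    · by_cases h2 : B ∣ ij.2
      · exact absurd ⟨h1, h2⟩ hij
      · simp [hF, if_neg h2]
    · simp [hF, if_neg h1]
  by_cases h : B ∣ d
  · obtain ⟨m, rfl⟩ := h
    rw [if_pos ⟨m, rfl⟩, Nat.mul_div_cancel_left _ hB, qbinom_add, Finset.sum_mul]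
    have hinj : ∀ x ∈ Finset.HasAntidiagonal.antidiagonal m, ∀ y ∈ Finset.HasAntidiagonal.antidiagonal m,
        (B * x.1, B * x.2) = (B * y.1, B * y.2) → x = y := by
      intro x _ y _ hxy
      rw [Prod.mk.injEq] at hxy
      exact Prod.ext (Nat.eq_of_mul_eq_mul_left hB hxy.1)
        (Nat.eq_of_mul_eq_mul_left hB hxy.2)
    have hsub : (Finset.HasAntidiagonal.antidiagonal m).image (fun kl : ℕ × ℕ => (B * kl.1, B * kl.2))
        ⊆ Finset.HasAntidiagonal.antidiagonal (B * m) := by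
      intro x hx
      simp only [Finset.mem_image] at hx
      obtain ⟨kl, hkl, rfl⟩ := hx
      rw [Finset.HasAntidiagonal.mem_antidiagonal] at hkl ⊢
      rw [← Nat.mul_add, hkl]
    calc ∑ x ∈ Finset.HasAntidiagonal.antidiagonal (B * m), F x
        = ∑ x ∈ (Finset.HasAntidiagonal.antidiagonal m).image (fun kl : ℕ × ℕ => (B * kl.1, B * kl.2)), F x := by
          refine (Finset.sum_subset hsub ?_).symm
          intro x hx hnx
          refine hzero x fun ⟨h1, h2⟩ => hnx ?_
          obtain ⟨a, ha⟩ := h1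
          obtain ⟨b, hb⟩ := h2
          refine Finset.mem_image.mpr ⟨(a, b), Finset.HasAntidiagonal.mem_antidiagonal.mpr ?_, by rw [← ha, ← hb]⟩
          apply Nat.eq_of_mul_eq_mul_left hB
          rw [Nat.mul_add, ← ha, ← hb, Finset.HasAntidiagonal.mem_antidiagonal.mp hx]
      _ = ∑ kl ∈ Finset.HasAntidiagonal.antidiagonal m, F (B * kl.1, B * kl.2) := Finset.sum_image hinj
      _ = ∑ ij ∈ Finset.HasAntidiagonal.antidiagonal m, qbinom α ij.1 * qbinom β ij.2 * c ^ m := by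
          refine Finset.sum_congr rfl fun kl hkl => ?_
          rw [Finset.HasAntidiagonal.mem_antidiagonal] at hkl
          simp only [hF, Nat.mul_div_cancel_left _ hB, if_pos (Dvd.intro _ rfl)]
          rw [← hkl, pow_add]
          ring
  · rw [if_neg h]
    refine Finset.sum_eq_zero fun ij hij => ?_
    rw [Finset.HasAntidiagonal.mem_antidiagonal] at hij
    exact hzero ij fun ⟨h1, h2⟩ => h (hij ▸ Nat.dvd_add h1 h2)

lemma qbinom_zero_left (n : ℕ) : qbinom 0 (n + 1) = 0 := by
  rw [qbinom, Finset.prod_eq_zero (Finset.mem_range.mpr (Nat.succ_pos n)) (by norm_num)]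
  simp

lemma qbinom_one_left : ∀ n : ℕ, 2 ≤ n → qbinom 1 n = 0 := by
  intro n hn
  rw [qbinom, Finset.prod_eq_zero (i := 1) (Finset.mem_range.mpr hn) (by norm_num)]
  simp

lemma gser_zero (c : ℚ) (B : ℕ) (hB : 0 < B) : gser 0 c B = 1 := by
  ext d
  rw [coeff_gser, PowerSeries.coeff_one]
  rcases Nat.eq_zero_or_pos d with rfl | hd
  · simp [qbinom_zero]
  · rw [if_neg hd.ne']
    by_cases h : B ∣ d
    · rw [if_pos h]
      have : 0 < d / B := Nat.div_pos (Nat.le_of_dvd hd h) hB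
      obtain ⟨m, hm⟩ := Nat.exists_eq_succ_of_ne_zero this.ne'
      rw [hm, qbinom_zero_left, zero_mul]
    · rw [if_neg h]

lemma gser_one_left (c : ℚ) (B : ℕ) (hB : 0 < B) :
    gser 1 c B = 1 + PowerSeries.C (R := ℚ) c * PowerSeries.X ^ B := by
  ext d
  rw [coeff_gser, map_add, PowerSeries.coeff_one, PowerSeries.coeff_C_mul,
    PowerSeries.coeff_X_pow]
  by_cases h : B ∣ d
  · rw [if_pos h]
    rcases Nat.eq_zero_or_pos d with rfl | hd
    · simp [qbinom_zero, hB.ne]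
    · have h1 : 0 < d / B := Nat.div_pos (Nat.le_of_dvd hd h) hB
      by_cases h2 : d = B
      · subst h2
        rw [Nat.div_self hB]
        have : qbinom 1 1 = 1 := by simp [qbinom]
        simp [this, hd.ne']
      · have hne : d / B ≠ 1 := fun h3 => h2 (by rw [← Nat.div_mul_cancel h, h3, one_mul])
        have : 2 ≤ d / B := by omega
        rw [qbinom_one_left _ this, zero_mul, if_neg hd.ne', if_neg h2]
        simp
  · rw [if_neg h]
    have hd0 : d ≠ 0 := fun hd => h (hd ▸ dvd_zero B)
    have hdB : d ≠ B := fun hd => h (hd ▸ dvd_refl B)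
    simp [hd0, hdB]

lemma gser_pow (α c : ℚ) (B : ℕ) (hB : 0 < B) (n : ℕ) :
    gser α c B ^ n = gser (n * α) c B := by
  induction n with
  | zero => simp [gser_zero c B hB]
  | succ m ih =>
    rw [pow_succ, ih, gser_mul _ _ _ _ hB]
    norm_num
    ring_nf

lemma gser_deriv (α c : ℚ) (B : ℕ) (hB : 0 < B) :
    (1 + PowerSeries.C (R := ℚ) c * PowerSeries.X ^ B) * PowerSeries.derivative ℚ (gser α c B)
      = PowerSeries.C (R := ℚ) (α * c * B) * PowerSeries.X ^ (B - 1) * gser α c B := by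
  ext d
  rw [add_mul, one_mul, map_add, mul_assoc, PowerSeries.coeff_C_mul,
    PowerSeries.coeff_X_pow_mul', mul_assoc, PowerSeries.coeff_C_mul,
    PowerSeries.coeff_X_pow_mul', PowerSeries.coeff_derivative]
  by_cases h : B ∣ (d + 1)
  · obtain ⟨m, hm⟩ := h
    have hm1 : 0 < m := Nat.pos_of_ne_zero (fun h0 => by simp [h0] at hm)
    obtain ⟨n, rfl⟩ : ∃ n, m = n + 1 := ⟨m - 1, by omega⟩
    have hm' : d + 1 = B * n + B := by rw [hm, Nat.mul_succ]
    have hB1 : B - 1 ≤ d := by omega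
    have hd1 : d - (B - 1) = B * n := by omega
    have hG1 : PowerSeries.coeff (R := ℚ) (d + 1) (gser α c B) = qbinom α (n + 1) * c ^ (n + 1) := by
      rw [coeff_gser, hm, if_pos ⟨n + 1, rfl⟩, Nat.mul_div_cancel_left _ hB]
    have hG2 : PowerSeries.coeff (R := ℚ) (d - (B - 1)) (gser α c B) = qbinom α n * c ^ n := by
      rw [coeff_gser, hd1, if_pos ⟨n, rfl⟩, Nat.mul_div_cancel_left _ hB]
    have hterm2 : (if B ≤ d then PowerSeries.coeff (R := ℚ) (d - B) (PowerSeries.derivative ℚ (gser α c B)) else 0)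
        = qbinom α n * c ^ n * ((B : ℚ) * n) := by
      rcases Nat.eq_zero_or_pos n with rfl | hn
      · rw [if_neg (by omega)]
        push_cast
        ring
      · have hBn : 0 < B * n := Nat.mul_pos hB hn
        have hBd : B ≤ d := by omega
        have hdB : d - B + 1 = B * n := by omega
        have hcast : ((d - B : ℕ) : ℚ) + 1 = (B : ℚ) * n := by exact_mod_cast congrArg (Nat.cast (R := ℚ)) hdB
        rw [if_pos hBd, PowerSeries.coeff_derivative, coeff_gser, hdB, if_pos ⟨n, rfl⟩,
          Nat.mul_div_cancel_left _ hB]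
        linear_combination (qbinom α n * c ^ n) * hcast
    have hdq : (d : ℚ) + 1 = (B : ℚ) * ((n : ℚ) + 1) := by exact_mod_cast congrArg (Nat.cast (R := ℚ)) hm
    have key := qbinom_succ α n
    rw [hterm2, if_pos hB1, hG1, hG2]
    linear_combination ((B : ℚ) * c ^ (n + 1)) * key + qbinom α (n + 1) * c ^ (n + 1) * hdq
  · have hG1 : PowerSeries.coeff (R := ℚ) (d + 1) (gser α c B) = 0 := by
      rw [coeff_gser, if_neg h]
    have hterm2 : (if B ≤ d then PowerSeries.coeff (R := ℚ) (d - B) (PowerSeries.derivative ℚ (gser α c B)) else 0) = 0 := by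
      split
      · next hBd =>
        rw [PowerSeries.coeff_derivative, coeff_gser, if_neg, zero_mul]
        intro hdvd
        apply h
        have h2 : d - B + 1 + B = d + 1 := by omega
        exact h2 ▸ Nat.dvd_add hdvd (dvd_refl B)
      · rfl
    have hterm3 : (if B - 1 ≤ d then PowerSeries.coeff (R := ℚ) (d - (B - 1)) (gser α c B) else 0) = 0 := by
      split
      · next hBd =>
        rw [coeff_gser, if_neg]
        intro hdvd
        apply h
        have h2 : d - (B - 1) + B = d + 1 := by omega
        exact h2 ▸ Nat.dvd_add hdvd (dvd_refl B)
      · rfl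
    rw [hG1, hterm2, hterm3, zero_mul, zero_add, mul_zero, mul_zero]

/-- Let `q, r, k` be positive integers, `B = q(r-1)+k`, and
`X̂, Ŷ ∈ ℚ⟦z⟧` the parametrising series above.  Then
`z·X̂'(z) = X̂(z)·(1 - (q(r-1)+k)·Ŷ(z)^{r-1}·X̂(z)^{r-1+k})` in `ℚ⟦z⟧`, where `X̂'`
is the formal derivative; equivalently,
`z·X̂'(z)·(1+(k/r)·z^B) = X̂(z)·(1+((k/r)-B)·z^B)`. -/
theorem leaky_logarithmic_derivative
    (q r k : ℕ) (hq : 0 < q) (hr : 0 < r) (hk : 0 < k)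
    (B : ℕ) (hB : B = q * (r - 1) + k) :
    (PowerSeries.X * PowerSeries.derivative ℚ (Xhat q r k) =
      Xhat q r k *
        (1 - PowerSeries.C (R := ℚ) (B : ℚ) * (Yhat q r k) ^ (r - 1) *
            (Xhat q r k) ^ (r - 1 + k))) ∧
    (PowerSeries.X * PowerSeries.derivative ℚ (Xhat q r k) *
        (1 + PowerSeries.C (R := ℚ) ((k : ℚ) / r) * PowerSeries.X ^ B) =
      Xhat q r k *
        (1 + PowerSeries.C (R := ℚ) ((k : ℚ) / r - B) * PowerSeries.X ^ B)) := by
  obtain ⟨q', rfl⟩ : ∃ q', q = q' + 1 := ⟨q - 1, by omega⟩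
  obtain ⟨r', rfl⟩ : ∃ r', r = r' + 1 := ⟨r - 1, by omega⟩
  simp only [Nat.add_sub_cancel] at hB ⊢
  subst hB
  have hBpos : 0 < (q' + 1) * r' + k := by positivity
  have hk0 : (k : ℚ) ≠ 0 := Nat.cast_ne_zero.mpr hk.ne'
  have hr0 : ((r' + 1 : ℕ) : ℚ) ≠ 0 := Nat.cast_ne_zero.mpr (Nat.succ_ne_zero r')
  -- abbreviations (definitions, purely notational)
  set B : ℕ := (q' + 1) * r' + k with hBdef
  have hXf : Xhat (q' + 1) (r' + 1) k
      = PowerSeries.X * gser (-((r' + 1 : ℕ) : ℚ) / k) ((k : ℚ) / (r' + 1 : ℕ)) B := by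
    rw [Xhat]
    simp only [Nat.add_sub_cancel]
    rw [binomPow_eq _ _ _ hBpos]
  have hYg : Yhat (q' + 1) (r' + 1) k
      = PowerSeries.X ^ q' * gser ((((r' + 1 : ℕ) : ℚ) + k) / k) ((k : ℚ) / (r' + 1 : ℕ)) B := by
    rw [Yhat]
    simp only [Nat.add_sub_cancel]
    rw [binomPow_eq _ _ _ hBpos]
  have hderiv := gser_deriv (-((r' + 1 : ℕ) : ℚ) / k) ((k : ℚ) / (r' + 1 : ℕ)) B hBpos
  have hαc : (-((r' + 1 : ℕ) : ℚ) / k) * ((k : ℚ) / (r' + 1 : ℕ)) * (B : ℚ) = -(B : ℚ) := by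
    field_simp
  have hXQ : (PowerSeries.X : PowerSeries ℚ) ^ 2 * PowerSeries.X ^ (B - 1)
      = PowerSeries.X * PowerSeries.X ^ B := by
    have h2 : 2 + (B - 1) = 1 + B := by omega
    rw [← pow_add, h2, pow_add, pow_one]
  have hC : PowerSeries.C (R := ℚ) ((k : ℚ) / (r' + 1 : ℕ) - (B : ℚ))
      = PowerSeries.C (R := ℚ) ((k : ℚ) / (r' + 1 : ℕ))
        + PowerSeries.C (R := ℚ) ((-((r' + 1 : ℕ) : ℚ) / k) * ((k : ℚ) / (r' + 1 : ℕ)) * (B : ℚ)) := by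
    rw [hαc, ← map_add]
    ring_nf
  have hdX : PowerSeries.derivative ℚ (Xhat (q' + 1) (r' + 1) k)
      = gser (-((r' + 1 : ℕ) : ℚ) / k) ((k : ℚ) / (r' + 1 : ℕ)) B
        + PowerSeries.X * PowerSeries.derivative ℚ
            (gser (-((r' + 1 : ℕ) : ℚ) / k) ((k : ℚ) / (r' + 1 : ℕ)) B) := by
    rw [hXf, Derivation.leibniz, derivative_X, smul_eq_mul, smul_eq_mul, mul_one]
    ring
  -- Statement 2
  have hs2 : PowerSeries.X * PowerSeries.derivative ℚ (Xhat (q' + 1) (r' + 1) k) *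
        (1 + PowerSeries.C (R := ℚ) ((k : ℚ) / (r' + 1 : ℕ)) * PowerSeries.X ^ B) =
      Xhat (q' + 1) (r' + 1) k *
        (1 + PowerSeries.C (R := ℚ) ((k : ℚ) / (r' + 1 : ℕ) - (B : ℚ)) * PowerSeries.X ^ B) := by
    rw [hdX, hXf]
    linear_combination (PowerSeries.X ^ 2 : PowerSeries ℚ) * hderiv
      + (PowerSeries.C (R := ℚ) ((-((r' + 1 : ℕ) : ℚ) / k) * ((k : ℚ) / (r' + 1 : ℕ)) * (B : ℚ))
          * gser (-((r' + 1 : ℕ) : ℚ) / k) ((k : ℚ) / (r' + 1 : ℕ)) B) * hXQ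
      - (PowerSeries.X * PowerSeries.X ^ B
          * gser (-((r' + 1 : ℕ) : ℚ) / k) ((k : ℚ) / (r' + 1 : ℕ)) B) * hC
  -- the combination Yhat^(r-1) * Xhat^(r-1+k)
  have hrat : (r' : ℚ) * ((((r' + 1 : ℕ) : ℚ) + k) / k)
      + ((r' + k : ℕ) : ℚ) * (-((r' + 1 : ℕ) : ℚ) / k) = -1 := by
    push_cast
    field_simp
    ring
  have hBe : q' * r' + (r' + k) = B := by rw [hBdef]; ring
  have hYX : Yhat (q' + 1) (r' + 1) k ^ r' * Xhat (q' + 1) (r' + 1) k ^ (r' + k)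
      = PowerSeries.X ^ B * gser (-1) ((k : ℚ) / (r' + 1 : ℕ)) B := by
    rw [hXf, hYg, mul_pow, mul_pow, ← pow_mul,
      gser_pow _ _ _ hBpos, gser_pow _ _ _ hBpos]
    calc PowerSeries.X ^ (q' * r') * gser ((r' : ℚ) * ((((r' + 1 : ℕ) : ℚ) + k) / k)) ((k : ℚ) / (r' + 1 : ℕ)) B *
          (PowerSeries.X ^ (r' + k) * gser (((r' + k : ℕ) : ℚ) * (-((r' + 1 : ℕ) : ℚ) / k)) ((k : ℚ) / (r' + 1 : ℕ)) B)
        = PowerSeries.X ^ (q' * r' + (r' + k)) *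
          (gser ((r' : ℚ) * ((((r' + 1 : ℕ) : ℚ) + k) / k)) ((k : ℚ) / (r' + 1 : ℕ)) B *
           gser (((r' + k : ℕ) : ℚ) * (-((r' + 1 : ℕ) : ℚ) / k)) ((k : ℚ) / (r' + 1 : ℕ)) B) := by
          rw [pow_add]; ring
      _ = PowerSeries.X ^ B * gser (-1) ((k : ℚ) / (r' + 1 : ℕ)) B := by
          rw [gser_mul _ _ _ _ hBpos, hrat, hBe]
  have hinv : gser (-1) ((k : ℚ) / (r' + 1 : ℕ)) B *
      (1 + PowerSeries.C (R := ℚ) ((k : ℚ) / (r' + 1 : ℕ)) * PowerSeries.X ^ B) = 1 := by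
    rw [← gser_one_left _ _ hBpos, gser_mul _ _ _ _ hBpos]
    norm_num
    exact gser_zero _ _ hBpos
  have hunit : (1 + PowerSeries.C (R := ℚ) ((k : ℚ) / (r' + 1 : ℕ)) * PowerSeries.X ^ B) ≠ 0 := by
    intro hcontra
    have := congrArg (PowerSeries.constantCoeff (R := ℚ)) hcontra
    simp [PowerSeries.constantCoeff_X, zero_pow hBpos.ne'] at this
  have hCB : PowerSeries.C (R := ℚ) ((k : ℚ) / (r' + 1 : ℕ) - (B : ℚ))
      = PowerSeries.C (R := ℚ) ((k : ℚ) / (r' + 1 : ℕ)) - PowerSeries.C (R := ℚ) (B : ℚ) := map_sub _ _ _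
  refine ⟨?_, hs2⟩
  refine mul_right_cancel₀ hunit ?_
  rw [hs2]
  linear_combination (Xhat (q' + 1) (r' + 1) k * PowerSeries.X ^ B) * hCB
    + (Xhat (q' + 1) (r' + 1) k * PowerSeries.C (R := ℚ) (B : ℚ)
        * (1 + PowerSeries.C (R := ℚ) ((k : ℚ) / (r' + 1 : ℕ)) * PowerSeries.X ^ B)) * hYX
    + (Xhat (q' + 1) (r' + 1) k * PowerSeries.C (R := ℚ) (B : ℚ) * PowerSeries.X ^ B) * hinv
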